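/- Let Y_1, …, Y_N be independent positive integer-valued random variables with E(1/Y_j) ≤ K for each j, where K is a positive constant. Then E(1/(Y_1 + ⋯ + Y_N)) ≤ K/N. (Proof combines AM–GM: Σ Y_j ≥ N (∏ Y_j)^{1/N}, Jensen's inequality E(Y^{−1/N})^N ≤ E(Y^{−1}), and independence.) -/

import Mathlib

open MeasureTheory ProbabilityTheory

/-- If `Y₁,…,Y_N` are independent positive-integer-valued random variables with
`E(1/Yⱼ) ≤ K`, then `E(1/(Y₁ + ⋯ + Y_N)) ≤ K/N`. -/
theorem expectation_inv_sum_le {Ω : Type*} [MeasurableSpace Ω]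
    (μ : Measure Ω) [IsProbabilityMeasure μ]
    (N : ℕ) (hN : 1 ≤ N) (Y : Fin N → Ω → ℕ)
    (hmeas : ∀ j, Measurable (Y j))
    (hpos : ∀ j ω, 1 ≤ Y j ω)
    (hindep : iIndepFun Y μ)
    (K : ℝ) (hK : 0 < K)
    (hint : ∀ j, Integrable (fun ω => ((Y j ω : ℝ))⁻¹) μ)
    (hKb : ∀ j, ∫ ω, ((Y j ω : ℝ))⁻¹ ∂μ ≤ K) :
    ∫ ω, ((∑ j, Y j ω : ℕ) : ℝ)⁻¹ ∂μ ≤ K / N := by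
  have hNpos : (0:ℝ) < N := by exact_mod_cast hN
  -- pointwise AM–HM bound
  have hpt : ∀ ω, ((∑ j, Y j ω : ℕ) : ℝ)⁻¹ ≤ (∑ j, ((Y j ω : ℝ))⁻¹) / (N:ℝ)^2 := by
    intro ω
    have hgpos : ∀ j ∈ Finset.univ, (0:ℝ) < (Y j ω : ℝ) := by
      intro j _; exact_mod_cast Nat.lt_of_lt_of_le Nat.zero_lt_one (hpos j ω)
    have H := Finset.sq_sum_div_le_sum_sq_div Finset.univ (fun _ => (1:ℝ)) hgpos
    simp only [one_pow, Finset.sum_const, Finset.card_univ, Fintype.card_fin,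
      nsmul_eq_mul, mul_one, one_div] at H
    have hsum : (0:ℝ) < ∑ j, (Y j ω : ℝ) := Finset.sum_pos hgpos ⟨⟨0, hN⟩, Finset.mem_univ _⟩
    have : ((N:ℝ))^2 / ∑ j, (Y j ω : ℝ) ≤ ∑ j, ((Y j ω : ℝ))⁻¹ := H
    rw [div_le_iff₀ hsum] at this
    rw [Nat.cast_sum, ← one_div, div_le_div_iff₀ hsum (by positivity)]
    linarith [this]
  have hintg : Integrable (fun ω => (∑ j, ((Y j ω : ℝ))⁻¹) / (N:ℝ)^2) μ :=
    (integrable_finset_sum _ fun j _ => hint j).div_const _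
  have h0 : 0 ≤ᵐ[μ] fun ω => ((∑ j, Y j ω : ℕ) : ℝ)⁻¹ :=
    Filter.Eventually.of_forall fun ω => by positivity
  calc ∫ ω, ((∑ j, Y j ω : ℕ) : ℝ)⁻¹ ∂μ
      ≤ ∫ ω, (∑ j, ((Y j ω : ℝ))⁻¹) / (N:ℝ)^2 ∂μ :=
        integral_mono_of_nonneg h0 hintg (Filter.Eventually.of_forall hpt)
    _ = (∑ j, ∫ ω, ((Y j ω : ℝ))⁻¹ ∂μ) / (N:ℝ)^2 := by
        rw [integral_div, integral_finset_sum _ fun j _ => hint j]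
    _ ≤ ((N:ℝ) * K) / (N:ℝ)^2 := by
        apply div_le_div_of_nonneg_right ?_ (by positivity) |>.trans_eq rfl
        calc ∑ j, ∫ ω, ((Y j ω : ℝ))⁻¹ ∂μ ≤ ∑ _j : Fin N, K :=
              Finset.sum_le_sum fun j _ => hKb j
          _ = (N:ℝ) * K := by simp [mul_comm]
    _ = K / N := by field_simp
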